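/- Let γ ∈ (0,1), λ > 0, and suppose perturbations of trajectories satisfy ‖Δs_t‖ ≤ D e^{λ t} ε for all t ≥ 0 and also ‖Δs_t‖ ≤ M (uniform bound), with the reward R being L-Lipschitz. Then the difference of discounted returns satisfies |Σ_{t=0}^∞ γ^t R(s'_t) − Σ_{t=0}^∞ γ^t R(s_t)| ≤ K ε^{α} for α = −log γ / λ < 1, where K is a constant depending only on γ, λ, D, M, L (for ε sufficiently small). -/

import Mathlib

open Real

set_option maxHeartbeats 1000000 in
/-- Perturbation bound on discounted returns under exponential trajectory divergence:
the difference of discounted returns is `O(ε^α)` with `α = -log γ / λ`. -/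
theorem discounted_return_holder {n : ℕ} (γ lam D M L : ℝ)
    (hγ : γ ∈ Set.Ioo (0 : ℝ) 1) (hlam : 0 < lam) (hD : 0 < D) (hM : 0 < M) (hL : 0 < L)
    (hα : -Real.log γ / lam < 1) :
    ∃ K > 0, ∃ ε₀ > 0, ∀ ε : ℝ, 0 < ε → ε ≤ ε₀ →
      ∀ (s s' : ℕ → EuclideanSpace ℝ (Fin n)) (R : EuclideanSpace ℝ (Fin n) → ℝ),
        (∀ x y, |R x - R y| ≤ L * ‖x - y‖) →
        (∀ t : ℕ, ‖s' t - s t‖ ≤ D * Real.exp (lam * t) * ε) →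
        (∀ t : ℕ, ‖s' t - s t‖ ≤ M) →
        Summable (fun t : ℕ => γ ^ t * R (s t)) →
        Summable (fun t : ℕ => γ ^ t * R (s' t)) →
        |(∑' t : ℕ, γ ^ t * R (s' t)) - ∑' t : ℕ, γ ^ t * R (s t)| ≤
          K * ε ^ (-Real.log γ / lam) := by
  obtain ⟨hγ0, hγ1⟩ := hγ
  have hlogγ : Real.log γ < 0 := Real.log_neg hγ0 hγ1
  set α : ℝ := -Real.log γ / lam with hαdef
  have hα0 : 0 < α := div_pos (by linarith) hlam
  set q : ℝ := γ * Real.exp lam with hqdef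
  have hq1 : 1 < q := by
    have h1 : -Real.log γ < lam := (div_lt_one hlam).mp hα
    have h2 : (0:ℝ) < Real.log γ + lam := by linarith
    calc (1:ℝ) = Real.exp 0 := by simp
      _ < Real.exp (Real.log γ + lam) := Real.exp_lt_exp.mpr h2
      _ = γ * Real.exp lam := by rw [Real.exp_add, Real.exp_log hγ0]
  have hq0 : 0 < q - 1 := by linarith
  have h1γ : 0 < 1 - γ := by linarith
  have hDM : (0:ℝ) < (D / M) ^ α := Real.rpow_pos_of_pos (div_pos hD hM) α
  refine ⟨L * M * (Real.exp lam / (q - 1) + 1 / (1 - γ)) * (D / M) ^ α, ?_, M / D,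
    div_pos hM hD, ?_⟩
  · have h3 : 0 < Real.exp lam / (q - 1) + 1 / (1 - γ) := by positivity
    positivity
  intro ε hε hεle s s' R hLip hexp hunif hs hs'
  have hDε : 0 < D * ε := mul_pos hD hε
  have hDεM : D * ε ≤ M := by
    have := (le_div_iff₀ hD).mp hεle
    linarith
  have hMDε : 1 ≤ M / (D * ε) := (one_le_div hDε).mpr hDεM
  set T₀ : ℝ := Real.log (M / (D * ε)) / lam with hT₀def
  have hT₀ : 0 ≤ T₀ := div_nonneg (Real.log_nonneg hMDε) hlam.le
  set T : ℕ := ⌈T₀⌉₊ with hTdef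
  have hTge : T₀ ≤ (T : ℝ) := Nat.le_ceil _
  have hTle : (T : ℝ) ≤ T₀ + 1 := (Nat.ceil_lt_add_one hT₀).le
  have hγT0 : (0:ℝ) ≤ γ ^ T := by positivity
  -- the dominating function
  set g : ℕ → ℝ := fun t => L * γ ^ t * min (D * Real.exp (lam * t) * ε) M with hgdef
  have hg_nonneg : ∀ t, 0 ≤ g t := by
    intro t
    have h0 : (0:ℝ) ≤ min (D * Real.exp (lam * t) * ε) M :=
      le_min (by positivity) hM.le
    have : (0:ℝ) ≤ L * γ ^ t := by positivity
    exact mul_nonneg this h0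
  have hg_le : ∀ t, g t ≤ L * M * γ ^ t := by
    intro t
    have h := min_le_right (D * Real.exp (lam * t) * ε) M
    calc g t ≤ L * γ ^ t * M := mul_le_mul_of_nonneg_left h (by positivity)
      _ = L * M * γ ^ t := by ring
  have hgeo : Summable (fun t : ℕ => L * M * γ ^ t) :=
    (summable_geometric_of_lt_one hγ0.le hγ1).mul_left (L * M)
  have hg_sum : Summable g := hgeo.of_nonneg_of_le hg_nonneg hg_le
  -- pointwise bound
  have hpt : ∀ t : ℕ, |γ ^ t * R (s' t) - γ ^ t * R (s t)| ≤ g t := by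
    intro t
    have hγt : (0:ℝ) ≤ γ ^ t := by positivity
    have h1 : |γ ^ t * R (s' t) - γ ^ t * R (s t)| = γ ^ t * |R (s' t) - R (s t)| := by
      rw [← mul_sub, abs_mul, abs_of_nonneg hγt]
    rw [h1]
    have h2 : |R (s' t) - R (s t)| ≤ L * ‖s' t - s t‖ := hLip _ _
    have h3 : L * ‖s' t - s t‖ ≤ L * min (D * Real.exp (lam * t) * ε) M :=
      mul_le_mul_of_nonneg_left (le_min (hexp t) (hunif t)) hL.le
    calc γ ^ t * |R (s' t) - R (s t)|
        ≤ γ ^ t * (L * min (D * Real.exp (lam * t) * ε) M) :=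
          mul_le_mul_of_nonneg_left (h2.trans h3) hγt
      _ = g t := by rw [hgdef]; ring
  -- reduce to bounding tsum g
  have habs : Summable (fun t : ℕ => |γ ^ t * R (s' t) - γ ^ t * R (s t)|) :=
    hg_sum.of_nonneg_of_le (fun t => abs_nonneg _) hpt
  have hstep1 : |(∑' t : ℕ, γ ^ t * R (s' t)) - ∑' t : ℕ, γ ^ t * R (s t)| ≤ ∑' t, g t := by
    rw [← hs'.tsum_sub hs]
    have hnorm : Summable (fun t : ℕ => ‖γ ^ t * R (s' t) - γ ^ t * R (s t)‖) := by
      simp only [Real.norm_eq_abs]; exact habs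
    have h := norm_tsum_le_tsum_norm hnorm
    simp only [Real.norm_eq_abs] at h
    exact h.trans (Summable.tsum_le_tsum hpt habs hg_sum)
  -- split the sum at T
  have hsplit : (∑' t, g t) = (∑ i ∈ Finset.range T, g i) + ∑' i, g (i + T) :=
    (hg_sum.sum_add_tsum_nat_add T).symm
  -- key exponential facts
  have hexpT : Real.exp (lam * T) ≤ Real.exp lam * (M / (D * ε)) := by
    have hlamT₀ : lam * T₀ = Real.log (M / (D * ε)) := by
      rw [hT₀def]; field_simp
    have h1 : lam * (T:ℝ) ≤ lam * (T₀ + 1) := mul_le_mul_of_nonneg_left hTle hlam.le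
    have h2 : lam * (T:ℝ) ≤ lam + Real.log (M / (D * ε)) := by
      rw [mul_add, mul_one] at h1; linarith
    calc Real.exp (lam * T) ≤ Real.exp (lam + Real.log (M / (D * ε))) :=
          Real.exp_le_exp.mpr h2
      _ = Real.exp lam * (M / (D * ε)) := by
          rw [Real.exp_add, Real.exp_log (by positivity)]
  -- head bound
  have hhead : (∑ i ∈ Finset.range T, g i) ≤ L * M * Real.exp lam * γ ^ T / (q - 1) := by
    have hterm : ∀ i ∈ Finset.range T, g i ≤ L * D * ε * q ^ i := by
      intro i _
      have hm := min_le_left (D * Real.exp (lam * i) * ε) M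
      calc g i ≤ L * γ ^ i * (D * Real.exp (lam * i) * ε) :=
            mul_le_mul_of_nonneg_left hm (by positivity)
        _ = L * D * ε * q ^ i := by
            rw [hqdef, mul_pow, ← Real.exp_nat_mul]
            ring_nf
    have hqT : q ^ T ≤ γ ^ T * (Real.exp lam * (M / (D * ε))) := by
      have h1 : q ^ T = γ ^ T * Real.exp (lam * T) := by
        rw [hqdef, mul_pow, ← Real.exp_nat_mul]
        ring_nf
      rw [h1]
      exact mul_le_mul_of_nonneg_left hexpT hγT0
    calc (∑ i ∈ Finset.range T, g i)
        ≤ ∑ i ∈ Finset.range T, L * D * ε * q ^ i := Finset.sum_le_sum hterm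
      _ = L * D * ε * ((q ^ T - 1) / (q - 1)) := by
          rw [← Finset.mul_sum, geom_sum_eq (ne_of_gt hq1)]
      _ ≤ L * D * ε * (q ^ T / (q - 1)) := by
          apply mul_le_mul_of_nonneg_left _ (by positivity)
          exact div_le_div_of_nonneg_right (by linarith) hq0.le
      _ ≤ L * D * ε * (γ ^ T * (Real.exp lam * (M / (D * ε))) / (q - 1)) := by
          apply mul_le_mul_of_nonneg_left _ (by positivity)
          exact div_le_div_of_nonneg_right hqT hq0.le
      _ = L * M * Real.exp lam * γ ^ T / (q - 1) := by
          field_simp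
  -- tail bound
  have htail : (∑' i, g (i + T)) ≤ L * M * γ ^ T / (1 - γ) := by
    have hle : ∀ i, g (i + T) ≤ (L * M * γ ^ T) * γ ^ i := by
      intro i
      calc g (i + T) ≤ L * M * γ ^ (i + T) := hg_le _
        _ = (L * M * γ ^ T) * γ ^ i := by rw [pow_add]; ring
    have hsum2 : Summable (fun i : ℕ => (L * M * γ ^ T) * γ ^ i) :=
      (summable_geometric_of_lt_one hγ0.le hγ1).mul_left _
    calc (∑' i, g (i + T)) ≤ ∑' i, (L * M * γ ^ T) * γ ^ i :=
          Summable.tsum_le_tsum hle ((summable_nat_add_iff T).2 hg_sum) hsum2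
      _ = (L * M * γ ^ T) * ∑' i : ℕ, γ ^ i := tsum_mul_left
      _ = (L * M * γ ^ T) * (1 - γ)⁻¹ := by
          rw [tsum_geometric_of_lt_one hγ0.le hγ1]
      _ = L * M * γ ^ T / (1 - γ) := by rw [div_eq_mul_inv]
  -- γ^T ≤ (D/M)^α * ε^α
  have hγT : γ ^ T ≤ (D / M) ^ α * ε ^ α := by
    have h1 : γ ^ T = Real.exp ((T : ℝ) * Real.log γ) := by
      rw [Real.exp_nat_mul, Real.exp_log hγ0]
    have h2 : (T : ℝ) * Real.log γ ≤ T₀ * Real.log γ :=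
      mul_le_mul_of_nonpos_right hTge hlogγ.le
    have h3 : T₀ * Real.log γ = α * Real.log (D * ε / M) := by
      rw [hT₀def, hαdef]
      have hl : Real.log (D * ε / M) = -Real.log (M / (D * ε)) := by
        rw [← Real.log_inv]
        congr 1
        field_simp
      rw [hl]
      field_simp
    have h4 : Real.exp (α * Real.log (D * ε / M)) = (D * ε / M) ^ α := by
      rw [Real.rpow_def_of_pos (by positivity), mul_comm]
    calc γ ^ T = Real.exp ((T : ℝ) * Real.log γ) := h1
      _ ≤ Real.exp (α * Real.log (D * ε / M)) :=
          Real.exp_le_exp.mpr (h2.trans_eq h3)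
      _ = (D * ε / M) ^ α := h4
      _ = (D / M) ^ α * ε ^ α := by
          rw [show D * ε / M = (D / M) * ε by ring,
            Real.mul_rpow (by positivity) hε.le]
  -- combine
  have hfinal : (∑' t, g t) ≤
      L * M * (Real.exp lam / (q - 1) + 1 / (1 - γ)) * (D / M) ^ α * ε ^ α := by
    have hC : (0:ℝ) ≤ L * M * (Real.exp lam / (q - 1) + 1 / (1 - γ)) := by positivity
    calc (∑' t, g t) = (∑ i ∈ Finset.range T, g i) + ∑' i, g (i + T) := hsplit
      _ ≤ L * M * Real.exp lam * γ ^ T / (q - 1) + L * M * γ ^ T / (1 - γ) :=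
          add_le_add hhead htail
      _ = L * M * (Real.exp lam / (q - 1) + 1 / (1 - γ)) * γ ^ T := by ring
      _ ≤ L * M * (Real.exp lam / (q - 1) + 1 / (1 - γ)) * ((D / M) ^ α * ε ^ α) :=
          mul_le_mul_of_nonneg_left hγT hC
      _ = L * M * (Real.exp lam / (q - 1) + 1 / (1 - γ)) * (D / M) ^ α * ε ^ α := by
          ring
  exact hstep1.trans hfinal
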